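/- arXiv:1104.2991 — 5 statements merged into one kernel-verified Lean document; each statement's English description precedes it below -/
import Mathlib

section
/- Let x, y, h be an sl(2) triple acting on a module and let K(z) = Σₖ αₖ z^k with α₀ = 1 and k(k-h₀+1)αₖ + α_{k-1} = 0 (h₀ ∉ ℤ_{≥2}). Then for any f₁ with h f₁ = (h₀-2) f₁, the normal-ordered operator satisfies :K(z): (x f₁) = 0 as a formal series; i.e., the formal solution operator annihilates terms of the form x·f₁. -/
/-- Let `K(z) = Σ αₖ z^k` with `α₀ = 1` and `k(k-h₀+1)αₖ + α_{k-1} = 0` (`h₀ ∉ ℤ_{≥2}`).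
For any `f₁` with `h f₁ = (h₀-2) f₁`, the normal-ordered operator `:K(z): = Σ αₖ x^k y^k`
annihilates `x·f₁` as a formal series: every partial sum vanishes to all orders in `x`,
i.e. lies in `x^(N+1)·V`. -/
theorem solution_operator_kills_x_terms {A V : Type*} [Ring A] [Algebra ℂ A]
    [AddCommGroup V] [Module A V] [Module ℂ V] [IsScalarTower ℂ A V]
    (x y h : A)
    (hx : h * x - x * h = 2 * x)
    (hy : h * y - y * h = -(2 * y))
    (hxy : x * y - y * x = h)
    (h₀ : ℂ) (hh₀ : ∀ m : ℕ, 2 ≤ m → h₀ ≠ (m : ℂ))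
    (α : ℕ → ℂ) (hα0 : α 0 = 1)
    (hrec : ∀ k : ℕ, 1 ≤ k → (k : ℂ) * ((k : ℂ) + 1 - h₀) * α k + α (k - 1) = 0)
    (f₁ : V) (hf₁ : h • f₁ = (h₀ - 2) • f₁) :
    ∀ N : ℕ, ∃ g : V,
      ∑ k ∈ Finset.range (N + 1), α k • (x ^ k • (y ^ k • (x • f₁)))
        = x ^ (N + 1) • g := by
  -- ℂ-scalars commute past the A-action
  have scomm : ∀ (c : ℂ) (a : A) (v : V), a • (c • v) = c • (a • v) := by
    intro c a v
    rw [← smul_one_smul A c v, smul_smul, mul_smul_comm, mul_one, smul_assoc]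
  have two_smul' : ∀ w : V, (2 : A) • w = (2 : ℂ) • w := fun w => by
    rw [two_smul, two_smul]
  have psucc : ∀ (a : A) (n : ℕ) (v : V), a ^ (n + 1) • v = a • (a ^ n • v) := by
    intro a n v
    conv_lhs => rw [pow_succ', mul_smul]
  have hy' : h * y = y * h - 2 * y := by
    have h1 := sub_eq_iff_eq_add.mp hy
    rw [h1]; abel
  have hxy' : y * x = x * y - h := by
    have h1 := sub_eq_iff_eq_add.mp hxy
    rw [eq_sub_iff_add_eq, h1]; abel
  have hyv : ∀ v : V, h • (y • v) = y • (h • v) - (2 : ℂ) • (y • v) := by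
    intro v
    calc h • (y • v) = (h * y) • v := (mul_smul _ _ _).symm
      _ = (y * h) • v - (2 * y) • v := by rw [hy', sub_smul]
      _ = y • (h • v) - (2 : ℂ) • (y • v) := by
          rw [mul_smul, mul_smul, two_smul']
  have hxv : ∀ v : V, y • (x • v) = x • (y • v) - h • v := by
    intro v
    rw [← mul_smul, hxy', sub_smul, mul_smul]
  -- h-eigenvalue of y^k f₁
  have Hh : ∀ k : ℕ, h • (y ^ k • f₁) = (h₀ - 2 - 2 * k) • (y ^ k • f₁) := by
    intro k
    induction k with
    | zero => simpa using hf₁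
    | succ k ih =>
        rw [psucc, hyv, ih, scomm, ← sub_smul]
        congr 1
        push_cast; ring
  -- key commutation: y^(k+1) x f₁ = x y^(k+1) f₁ - (k+1)(h₀-k-2) y^k f₁
  have Xk : ∀ k : ℕ, y ^ (k + 1) • (x • f₁)
      = x • (y ^ (k + 1) • f₁) - (((k : ℂ) + 1) * (h₀ - (k : ℂ) - 2)) • (y ^ k • f₁) := by
    intro k
    induction k with
    | zero =>
        rw [psucc y 0 (x • f₁), psucc y 0 f₁]
        simp only [pow_zero, one_smul, Nat.cast_zero]
        rw [hxv, hf₁]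
        congr 1
        ring
    | succ k ih =>
        rw [psucc y (k + 1) (x • f₁), ih, smul_sub,
          scomm (((k : ℂ) + 1) * (h₀ - (k : ℂ) - 2)) y (y ^ k • f₁),
          hxv, ← psucc y (k + 1) f₁, ← psucc y k f₁, Hh (k + 1), sub_sub, ← add_smul]
        congr 2
        push_cast; ring
  -- the telescoping partial sums
  suffices H : ∀ N : ℕ,
      ∑ k ∈ Finset.range (N + 1), α k • (x ^ k • (y ^ k • (x • f₁)))
        = x ^ (N + 1) • (α N • (y ^ N • f₁)) by
    intro N; exact ⟨_, H N⟩
  intro N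
  induction N with
  | zero => simp [hα0]
  | succ N ih =>
      have hrecN := hrec (N + 1) (by omega)
      simp only [Nat.add_sub_cancel] at hrecN
      have key : α (N + 1) * (((N : ℂ) + 1) * (h₀ - (N : ℂ) - 2)) = α N := by
        push_cast at hrecN
        linear_combination -hrecN
      rw [Finset.sum_range_succ, ih, Xk N, smul_sub,
        show x ^ (N + 1) • (x • (y ^ (N + 1) • f₁)) = x ^ (N + 1 + 1) • (y ^ (N + 1) • f₁)
          from by conv_rhs => rw [pow_succ, mul_smul],
        scomm (((N : ℂ) + 1) * (h₀ - (N : ℂ) - 2)) (x ^ (N + 1)) (y ^ N • f₁),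
        scomm (α N) (x ^ (N + 1)) (y ^ N • f₁),
        scomm (α (N + 1)) (x ^ (N + 1 + 1)) (y ^ (N + 1) • f₁),
        smul_sub,
        smul_smul (α (N + 1)) (((N : ℂ) + 1) * (h₀ - (N : ℂ) - 2))
          (x ^ (N + 1) • (y ^ N • f₁)),
        key]
      abel
end

section
/- If a formal series Σ_{i≥0} fᵢ with fᵢ in the (w₀ - α - i)-weight spaces, multiplied by x^α, is annihilated by y where x, y, h satisfy the extended relation [x^α, y] = α x^(α-1)(h + α - 1), and f₀ ≠ 0 along the leading order, then necessarily α = 0 or α = h₀ - 1, where h₀ = d + 2w₀ is the h-eigenvalue of x^α f₀. -/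
/-- Suppose `y` and the formal powers `x^β` (written `xp β`) satisfy the extended
commutation relation `[x^β, y] = β x^(β-1)(h + β - 1)`, `f₀` has `h`-eigenvalue
`h₀ - 2α` (so `x^α f₀` has eigenvalue `h₀`), the series `x^α f₀ + ⋯` is annihilated
by `y` at leading order (i.e. `y·(x^α·f₀)` lies in `x^α·V`), and `f₀` is nonzero at
leading order (no nonzero multiple of `x^(α-1)·f₀` lies in `x^α·V`). Then
necessarily `α = 0` or `α = h₀ - 1`. -/
theorem indicial_roots {A V : Type*} [Ring A] [Algebra ℂ A]
    [AddCommGroup V] [Module A V] [Module ℂ V] [IsScalarTower ℂ A V]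
    (y h : A) (xp : ℂ → A) (α h₀ : ℂ)
    (hrel : ∀ β : ℂ, y * xp β = xp β * y - β • (xp (β - 1) * (h + (β - 1) • (1 : A))))
    (f₀ : V) (hwt : h • f₀ = (h₀ - 2 * α) • f₀)
    (hann : ∃ w : V, y • (xp α • f₀) = xp α • w)
    (hgen : ∀ c : ℂ, (∃ w : V, c • (xp (α - 1) • f₀) = xp α • w) → c = 0) :
    α = 0 ∨ α = h₀ - 1 := by
  obtain ⟨w, hw⟩ := hann
  have e1 : y • (xp α • f₀) = (y * xp α) • f₀ := (mul_smul _ _ _).symm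
  rw [hrel α] at e1
  have e2 : (xp (α - 1) * (h + (α - 1) • (1 : A))) • f₀
      = (h₀ - α - 1) • (xp (α - 1) • f₀) := by
    rw [mul_smul, add_smul, hwt, smul_assoc, one_smul, ← add_smul]
    rw [show h₀ - 2 * α + (α - 1) = h₀ - α - 1 by ring]
    rw [smul_comm]
  rw [sub_smul, smul_assoc, e2, smul_smul, mul_smul y (xp α) f₀, mul_smul (xp α) y f₀, hw] at e1
  have key : (α * (h₀ - α - 1)) • (xp (α - 1) • f₀) = xp α • (y • f₀ - w) := by
    rw [smul_sub, e1, ← smul_smul]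
    abel
  have := hgen _ ⟨_, key⟩
  rcases mul_eq_zero.mp this with h0 | h1
  · exact Or.inl h0
  · right; linear_combination -h1
end

section
/- Let x, y, h be an sl(2) triple acting on a module with a central-like element t (playing the role of log τ) satisfying [h,t] = 2 and [x,t] = 0. Then for h₀ ∈ ℤ_{≥1} and any f₁ with h·f₁ = (h₀-2)·f₁, the Weyl-ordered operator W = (t·y^{h₀-1} + y^{h₀-1}·t)/2 satisfies [W, x]·f₁ = (1-h₀)·y^{h₀-2}·f₁. -/
lemma aux_h_pow {A : Type*} [Ring A] [Algebra ℂ A] (y h : A)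
    (hy : h * y = y * h - (2:ℂ) • y) (k : ℕ) :
    h * y ^ k = y ^ k * h - ((2:ℂ) * k) • y ^ k := by
  induction k with
  | zero => simp
  | succ k ih =>
    rw [pow_succ, ← mul_assoc, ih]
    simp only [sub_mul, smul_mul_assoc, mul_assoc, hy, mul_sub, mul_smul_comm]
    push_cast
    module

lemma aux_x_pow {A : Type*} [Ring A] [Algebra ℂ A] (x y h : A)
    (hy : h * y = y * h - (2:ℂ) • y) (hxy : x * y = y * x + h) (n : ℕ) :
    x * y ^ (n + 1) = y ^ (n + 1) * x + ((n:ℂ) + 1) • (y ^ n * h)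
      - (((n:ℂ) + 1) * (n:ℂ)) • y ^ n := by
  induction n with
  | zero => simpa using hxy
  | succ n ih =>
    rw [pow_succ, ← mul_assoc, ih]
    simp only [sub_mul, add_mul, smul_mul_assoc, mul_assoc, hy, hxy, mul_sub, mul_add,
      mul_smul_comm, pow_succ]
    push_cast
    module

set_option maxRecDepth 8000 in
set_option maxHeartbeats 1000000 in
/-- Let `x, y, h` be an sl(2) triple and `t` (playing the role of `log τ`) satisfy
`[h,t] = 2` and `[x,t] = 0`. Then for `h₀ ∈ ℤ_{≥1}` and any `f₁` with
`h·f₁ = (h₀-2)·f₁`, the Weyl-ordered operator `W = (t·y^(h₀-1) + y^(h₀-1)·t)/2`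
satisfies `[W, x]·f₁ = (1-h₀)·y^(h₀-2)·f₁`. -/
theorem weyl_ordered_commutator {A V : Type*} [Ring A] [Algebra ℂ A]
    [AddCommGroup V] [Module A V] [Module ℂ V] [IsScalarTower ℂ A V]
    (x y h t : A)
    (hx : h * x - x * h = 2 * x)
    (hy : h * y - y * h = -(2 * y))
    (hxy : x * y - y * x = h)
    (hht : h * t - t * h = 2)
    (hxt : x * t - t * x = 0)
    (h₀ : ℕ) (hh₀ : 1 ≤ h₀) (f₁ : V)
    (hf₁ : h • f₁ = ((h₀ : ℂ) - 2) • f₁) :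
    ((((1 : ℂ) / 2) • (t * y ^ (h₀ - 1) + y ^ (h₀ - 1) * t)) * x
        - x * (((1 : ℂ) / 2) • (t * y ^ (h₀ - 1) + y ^ (h₀ - 1) * t))) • f₁
      = ((1 : ℂ) - (h₀ : ℂ)) • (y ^ (h₀ - 2) • f₁) := by
  have sc : ∀ (c : ℂ) (a : A) (v : V), a • (c • v) = c • (a • v) := by
    intro c a v
    rw [show c • v = (c • (1:A)) • v by rw [smul_assoc, one_smul],
      ← mul_smul, mul_smul_comm, mul_one, smul_assoc]
  have txc : t * x = x * t := by
    have := sub_eq_zero.mp hxt; rw [this]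
  have hy' : h * y = y * h - (2:ℂ) • y := by
    rw [Algebra.smul_def, map_ofNat, sub_eq_iff_eq_add.mp hy]; abel
  have hxy' : x * y = y * x + h := by
    rw [sub_eq_iff_eq_add.mp hxy]; abel
  have hht' : h * t = t * h + (2:ℂ) • (1:A) := by
    rw [Algebra.smul_def, map_ofNat, mul_one, sub_eq_iff_eq_add.mp hht]; abel
  obtain ⟨n, rfl⟩ : ∃ n, h₀ = n + 1 := ⟨h₀ - 1, (Nat.succ_pred_eq_of_pos hh₀).symm⟩
  cases n with
  | zero =>
    rw [smul_mul_assoc, mul_smul_comm, ← smul_sub]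
    have hE : (t * y ^ (0+1-1) + y ^ (0+1-1) * t) * x
        - x * (t * y ^ (0+1-1) + y ^ (0+1-1) * t) = 0 := by
      norm_num
      rw [add_mul, mul_add, txc]
      abel
    rw [hE, smul_zero]
    norm_num
  | succ m =>
    have hf : h • f₁ = (m : ℂ) • f₁ := by
      rw [hf₁]; congr 1; push_cast; ring
    have F3 := aux_x_pow x y h hy' hxy' m
    simp only [show m + 1 + 1 - 1 = m + 1 from rfl, show m + 1 + 1 - 2 = m from rfl]
    set Y := y ^ (m + 1) with hY
    have KK : (t * Y + Y * t) * x - x * (t * Y + Y * t)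
        = (((m:ℂ)+1) * (m:ℂ)) • (t * y ^ m) - ((m:ℂ)+1) • (t * (y ^ m * h))
          + (((m:ℂ)+1) * (m:ℂ)) • (y ^ m * t) - ((m:ℂ)+1) • (y ^ m * (t * h))
          - ((2:ℂ) * ((m:ℂ)+1)) • y ^ m := by
      have e1 : x * (t * Y) = t * (x * Y) := by
        rw [← mul_assoc, ← txc, mul_assoc]
      have e2 : x * (Y * t) = (x * Y) * t := by rw [mul_assoc]
      simp only [add_mul, mul_add, e1, e2, F3]
      simp only [mul_add, add_mul, mul_sub, sub_mul, mul_assoc, smul_mul_assoc,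
        mul_smul_comm, mul_one, txc, hht']
      module
    rw [smul_mul_assoc, mul_smul_comm, ← smul_sub, KK]
    simp only [Algebra.smul_def]
    simp only [mul_smul, sub_smul, add_smul]
    simp only [algebraMap_smul, hf]
    simp only [sc, smul_smul]
    push_cast
    generalize (t * y ^ m) • f₁ = v1
    generalize (y ^ m * t) • f₁ = v2
    generalize y ^ m • f₁ = v3
    module
end

section
/- Let x, y, h be an sl(2) triple acting on a module. For any formal power series K(z) ∈ ℂ[[z]] with normal ordering :z^k: = x^k y^k, the operator identity y·:K(z): = :(zK'' + 2K' + K): · y - :K': · y·h holds on arbitrary module elements (no eigenvalue assumption). -/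
/-- For an sl(2) triple `x, y, h` and any (truncated) formal series
`K(z) = Σ αₖ z^k` with normal ordering `:z^k: = x^k y^k`, the operator identity
`y·:K(z): = :(zK'' + 2K' + K):·y - :K':·y·h` holds (no eigenvalue assumption),
order by order. -/
theorem normal_ordered_left_identity {A : Type*} [Ring A] [Algebra ℂ A]
    (x y h : A)
    (hx : h * x - x * h = 2 * x)
    (hy : h * y - y * h = -(2 * y))
    (hxy : x * y - y * x = h)
    (N : ℕ) (α : ℕ → ℂ) (htop : α (N + 1) = 0) :
    ∑ k ∈ Finset.range (N + 1), α k • (y * (x ^ k * y ^ k))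
      = ∑ k ∈ Finset.range (N + 1),
          ((((k : ℂ) + 1) * ((k : ℂ) + 2)) * α (k + 1) + α k) • (x ^ k * y ^ k * y)
        - ∑ k ∈ Finset.range (N + 1),
          (((k : ℂ) + 1) * α (k + 1)) • (x ^ k * y ^ k * (y * h)) := by
  have e1 : y * x = x * y - h := by rw [← hxy]; abel
  have e2 : h * x = x * h + (2 : ℂ) • x := by
    rw [two_smul, ← two_mul, ← hx]; abel
  have e3 : h * y = y * h - (2 : ℂ) • y := by
    rw [two_smul, ← two_mul, ← neg_neg (2 * y), ← hy]; abel
  have yx_pow : ∀ k : ℕ, y * x ^ (k + 1)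
      = x ^ (k + 1) * y - ((k : ℂ) + 1) • (x ^ k * h) - (((k : ℂ) + 1) * (k : ℂ)) • x ^ k := by
    intro k
    induction k with
    | zero => simp [e1]
    | succ k ih =>
      have h1 : y * x ^ (k + 2) = (y * x ^ (k + 1)) * x := by
        rw [pow_succ, ← mul_assoc]
      rw [h1, ih]
      simp only [sub_mul, add_mul, mul_sub, mul_add, smul_mul_assoc, mul_smul_comm, mul_assoc, e1, e2]
      simp only [pow_succ, sub_mul, add_mul, mul_sub, mul_add, smul_mul_assoc, mul_smul_comm, mul_assoc]
      push_cast
      module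
  have hy_pow : ∀ k : ℕ, h * y ^ k = y ^ k * h - (2 * (k : ℂ)) • y ^ k := by
    intro k
    induction k with
    | zero => simp
    | succ k ih =>
      have h1 : h * y ^ (k + 1) = (h * y ^ k) * y := by
        rw [pow_succ, ← mul_assoc]
      rw [h1, ih]
      simp only [sub_mul, add_mul, mul_sub, mul_add, smul_mul_assoc, mul_smul_comm, mul_assoc, e3]
      simp only [pow_succ, sub_mul, add_mul, mul_sub, mul_add, smul_mul_assoc, mul_smul_comm, mul_assoc]
      push_cast
      module
  have key : ∀ k : ℕ, y * (x ^ (k + 1) * y ^ (k + 1))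
      = x ^ (k + 1) * y ^ (k + 1) * y
        + (((k : ℂ) + 1) * ((k : ℂ) + 2)) • (x ^ k * y ^ k * y)
        - ((k : ℂ) + 1) • (x ^ k * y ^ k * (y * h)) := by
    intro k
    rw [← mul_assoc, yx_pow k]
    rw [sub_mul, sub_mul, smul_mul_assoc, smul_mul_assoc,
      mul_assoc (x ^ k) h (y ^ (k + 1)), hy_pow (k + 1)]
    have c1 : y * y ^ (k + 1) = y ^ (k + 1) * y := by
      rw [← pow_succ', pow_succ]
    simp only [mul_assoc]
    rw [c1]
    simp only [pow_succ, sub_mul, add_mul, mul_sub, mul_add, smul_mul_assoc, mul_smul_comm, smul_sub, smul_add, mul_assoc]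
    push_cast
    module
  have term : ∀ k : ℕ, α (k + 1) • (y * (x ^ (k + 1) * y ^ (k + 1)))
      = ((((k : ℂ) + 1) * ((k : ℂ) + 2)) * α (k + 1)) • (x ^ k * y ^ k * y)
        + α (k + 1) • (x ^ (k + 1) * y ^ (k + 1) * y)
        - (((k : ℂ) + 1) * α (k + 1)) • (x ^ k * y ^ k * (y * h)) := by
    intro k
    rw [key k]
    module
  rw [Finset.sum_range_succ' (fun k => α k • (y * (x ^ k * y ^ k))) N]
  simp only [term]
  simp only [add_smul]
  simp only [Finset.sum_add_distrib, Finset.sum_sub_distrib]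
  rw [Finset.sum_range_succ
      (fun k => ((((k : ℂ) + 1) * ((k : ℂ) + 2)) * α (k + 1)) • (x ^ k * y ^ k * y)) N,
    Finset.sum_range_succ
      (fun k => (((k : ℂ) + 1) * α (k + 1)) • (x ^ k * y ^ k * (y * h))) N,
    Finset.sum_range_succ' (fun k => α k • (x ^ k * y ^ k * y)) N,
    htop]
  simp only [mul_zero, zero_smul, add_zero, pow_zero, one_mul, mul_one]
  abel
end

section
/- Let x, y, h be an sl(2) triple acting on a module. For any K(z) ∈ ℂ[[z]] with :z^k: = x^k y^k, the operator identity :K(z):·x = x·:(zK'' + K): - x·:K':·h holds. -/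
open Finset

section aux
variable {A : Type*} [Ring A] (x y h : A)

lemma aux_hym (hy : h * y - y * h = -(2 * y)) :
    ∀ m : ℕ, h * y ^ m = y ^ m * h - (2 * m) • y ^ m := by
  have h1 : h * y = y * h - (2:ℕ) • y := by
    have := sub_eq_iff_eq_add.mp hy
    rw [this]; simp [two_smul, two_mul]; abel
  intro m
  induction m with
  | zero => simp
  | succ m ih =>
    calc h * y ^ (m + 1) = (h * y) * y ^ m := by rw [pow_succ', ← mul_assoc]
      _ = y * (h * y ^ m) - (2:ℕ) • (y * y ^ m) := by
          rw [h1]; rw [sub_mul, smul_mul_assoc, mul_assoc]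
      _ = y * (y ^ m * h) - (2 * m) • (y * y ^ m) - (2:ℕ) • (y * y ^ m) := by
          rw [ih, mul_sub, mul_smul_comm]
      _ = y ^ (m+1) * h - (2 * (m+1)) • y ^ (m+1) := by
          rw [← pow_succ' y m, ← mul_assoc, ← pow_succ' y m]
          rw [sub_sub, ← add_smul]
          ring_nf

lemma aux_ykx (hy : h * y - y * h = -(2 * y)) (hxy : x * y - y * x = h) :
    ∀ k : ℕ, y ^ (k+1) * x
      = x * y ^ (k+1) - (k+1) • (y ^ k * h) + ((k+1) * k) • y ^ k := by
  have h1 : y * x = x * y - h := by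
    have := sub_eq_iff_eq_add.mp hxy
    rw [this]; abel
  intro k
  induction k with
  | zero => simpa using h1
  | succ k ih =>
    calc y ^ (k + 2) * x = y * (y ^ (k+1) * x) := by
          rw [pow_succ' y (k+1), mul_assoc]
      _ = y * (x * y ^ (k+1)) - (k+1) • ((y * y ^ k) * h) + ((k+1) * k) • (y * y ^ k) := by
          rw [ih, mul_add, mul_sub, mul_smul_comm, mul_smul_comm, mul_assoc]
      _ = (y * x) * y ^ (k+1) - (k+1) • (y ^ (k+1) * h) + ((k+1) * k) • y ^ (k+1) := by
          rw [← mul_assoc, ← pow_succ' y k]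
      _ = x * y ^ (k+2) - h * y ^ (k+1) - (k+1) • (y ^ (k+1) * h) + ((k+1) * k) • y ^ (k+1) := by
          rw [h1, sub_mul, mul_assoc, ← pow_succ' y (k+1)]
      _ = x * y ^ (k+2) - (y ^ (k+1) * h - (2 * (k+1)) • y ^ (k+1))
            - (k+1) • (y ^ (k+1) * h) + ((k+1) * k) • y ^ (k+1) := by
          rw [aux_hym y h hy (k+1)]
      _ = x * y ^ (k+2) - (k+2) • (y ^ (k+1) * h) + ((k+2) * (k+1)) • y ^ (k+1) := by
          module
end aux

lemma shift_sum {A : Type*} [AddCommGroup A] (N : ℕ) (g : ℕ → A)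
    (hg0 : g 0 = 0) (hgN : g (N+1) = 0) :
    ∑ k ∈ Finset.range (N + 1), g k = ∑ k ∈ Finset.range (N + 1), g (k+1) := by
  rw [Finset.sum_range_succ' g N, Finset.sum_range_succ (fun k => g (k+1)) N, hg0, hgN]

/-- For an sl(2) triple `x, y, h` and any (truncated) formal series
`K(z) = Σ αₖ z^k` with normal ordering `:z^k: = x^k y^k`, the operator identity
`:K(z):·x = x·:(zK'' + K): - x·:K':·h` holds, order by order. -/
theorem normal_ordered_right_identity {A : Type*} [Ring A] [Algebra ℂ A]
    (x y h : A)
    (hx : h * x - x * h = 2 * x)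
    (hy : h * y - y * h = -(2 * y))
    (hxy : x * y - y * x = h)
    (N : ℕ) (α : ℕ → ℂ) (htop : α (N + 1) = 0) :
    ∑ k ∈ Finset.range (N + 1), α k • (x ^ k * y ^ k * x)
      = ∑ k ∈ Finset.range (N + 1),
          ((((k : ℂ) + 1) * (k : ℂ)) * α (k + 1) + α k) • (x * (x ^ k * y ^ k))
        - ∑ k ∈ Finset.range (N + 1),
          (((k : ℂ) + 1) * α (k + 1)) • (x * (x ^ k * y ^ k) * h) := by
  have term : ∀ k : ℕ, x ^ (k+1) * y ^ (k+1) * x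
      = x * (x ^ (k+1) * y ^ (k+1))
        - ((k:ℂ)+1) • (x * (x ^ k * y ^ k) * h)
        + (((k:ℂ)+1) * (k:ℂ)) • (x * (x ^ k * y ^ k)) := by
    intro k
    rw [mul_assoc, aux_ykx x y h hy hxy k, mul_add, mul_sub, mul_smul_comm, mul_smul_comm]
    have e1 : x ^ (k+1) * (x * y ^ (k+1)) = x * (x ^ (k+1) * y ^ (k+1)) := by
      rw [← mul_assoc, ← pow_succ, pow_succ' x (k+1), mul_assoc]
    have e2 : x ^ (k+1) * (y ^ k * h) = x * (x ^ k * y ^ k) * h := by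
      rw [pow_succ' x k, mul_assoc, mul_assoc, mul_assoc]
    have e3 : x ^ (k+1) * y ^ k = x * (x ^ k * y ^ k) := by
      rw [pow_succ' x k, mul_assoc]
    rw [e1, e2, e3,
      ← Nat.cast_smul_eq_nsmul ℂ (k+1) (x * (x ^ k * y ^ k) * h),
      ← Nat.cast_smul_eq_nsmul ℂ ((k+1)*k) (x * (x ^ k * y ^ k))]
    push_cast
    module
  set T : ℕ → A := fun k => x * (x ^ k * y ^ k) with hT
  have key : ∀ k : ℕ, α k • (x ^ k * y ^ k * x)
      = α k • T k
        - ((k:ℂ) * α k) • (T (k-1) * h)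
        + ((k:ℂ) * ((k:ℂ)-1) * α k) • T (k-1) := by
    intro k
    match k with
    | 0 => simp [hT]
    | (k+1) =>
      rw [term k]
      simp only [Nat.add_sub_cancel, hT]
      push_cast
      module
  rw [Finset.sum_congr rfl (fun k _ => key k)]
  rw [Finset.sum_add_distrib, Finset.sum_sub_distrib]
  have shiftB : ∑ k ∈ Finset.range (N+1), ((k:ℂ) * α k) • (T (k-1) * h)
      = ∑ k ∈ Finset.range (N+1), (((k:ℂ)+1) * α (k+1)) • (T k * h) := by
    rw [shift_sum N (fun k => ((k:ℂ) * α k) • (T (k-1) * h)) (by simp) (by simp [htop])]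
    apply Finset.sum_congr rfl
    intro k _
    simp only [Nat.add_sub_cancel]
    push_cast
    module
  have shiftC : ∑ k ∈ Finset.range (N+1), ((k:ℂ) * ((k:ℂ)-1) * α k) • T (k-1)
      = ∑ k ∈ Finset.range (N+1), ((((k:ℂ)+1) * (k:ℂ)) * α (k+1)) • T k := by
    rw [shift_sum N (fun k => ((k:ℂ) * ((k:ℂ)-1) * α k) • T (k-1)) (by simp) (by simp [htop])]
    apply Finset.sum_congr rfl
    intro k _
    simp only [Nat.add_sub_cancel]
    push_cast
    module
  rw [shiftB, shiftC]
  have expand : ∑ k ∈ Finset.range (N+1),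
      ((((k : ℂ) + 1) * (k : ℂ)) * α (k + 1) + α k) • T k
      = ∑ k ∈ Finset.range (N+1), α k • T k
        + ∑ k ∈ Finset.range (N+1), ((((k : ℂ) + 1) * (k : ℂ)) * α (k + 1)) • T k := by
    rw [← Finset.sum_add_distrib]
    apply Finset.sum_congr rfl
    intro k _
    rw [add_smul]
    abel
  rw [expand]
  abel
end
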